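/- Let d ≥ 1, 0 < α ≤ 2, 0 < β ≤ 1, α < γ ≤ d, d > α, and assume d > (α(2+β) - γ)/β. Let φ be a nonnegative Schwartz function on ℝ^d and define Gψ(x) = ∫_{ℝ^d} ψ(y)|x-y|^{α-d} dy. Then ∫_{ℝ^d} G((Gφ)^{1+β})(x) (1 + |x|^γ)^{-1} dx < ∞. -/

import Mathlib

set_option maxHeartbeats 1000000

open MeasureTheory Metric Set Module

lemma euclidean_nontrivial (d : ℕ) (hd : 1 ≤ d) : Nontrivial (EuclideanSpace ℝ (Fin d)) := by
  refine nontrivial_of_ne (EuclideanSpace.single (⟨0, by omega⟩ : Fin d) 1) 0 ?_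
  intro h
  have := congrArg (fun v : EuclideanSpace ℝ (Fin d) => v (⟨0, by omega⟩ : Fin d)) h
  simp [EuclideanSpace.single_apply] at this

lemma polar_lintegral (d : ℕ) (hd : 1 ≤ d) (f : ℝ → ENNReal) (hf : Measurable f) :
    ∫⁻ x : EuclideanSpace ℝ (Fin d), f ‖x‖ =
      volume (ball (0 : EuclideanSpace ℝ (Fin d)) 1) * d *
        ∫⁻ r in Set.Ioi (0 : ℝ), ENNReal.ofReal (r ^ (d - 1)) * f r := by
  haveI : Nontrivial (EuclideanSpace ℝ (Fin d)) := euclidean_nontrivial d hd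
  have hdim : finrank ℝ (EuclideanSpace ℝ (Fin d)) = d := finrank_euclideanSpace_fin
  have h1 : ∫⁻ x : EuclideanSpace ℝ (Fin d), f ‖x‖ =
      ∫⁻ x : ({(0)}ᶜ : Set (EuclideanSpace ℝ (Fin d))), f ‖x.1‖
        ∂(volume.comap Subtype.val) := by
    rw [← setLIntegral_univ (μ := volume.comap Subtype.val)]
    rw [setLIntegral_subtype (measurableSet_singleton 0).compl univ (fun x => f ‖x‖)]
    rw [image_univ, Subtype.range_coe, MeasureTheory.restrict_compl_singleton]
  have h2 : ∫⁻ x : ({(0)}ᶜ : Set (EuclideanSpace ℝ (Fin d))), f ‖x.1‖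
        ∂(volume.comap Subtype.val) =
      ∫⁻ p : sphere (0 : EuclideanSpace ℝ (Fin d)) 1 × Set.Ioi (0:ℝ), f p.2
        ∂(Measure.toSphere (volume) |>.prod
            (Measure.volumeIoiPow (finrank ℝ (EuclideanSpace ℝ (Fin d)) - 1))) := by
    refine Eq.trans ?_ ((Measure.measurePreserving_homeomorphUnitSphereProd
      (volume : Measure (EuclideanSpace ℝ (Fin d)))).lintegral_comp
      ((hf.comp measurable_subtype_coe).comp measurable_snd))
    apply lintegral_congr
    intro x
    show f ‖x.1‖ = f (‖x.1‖ / 1)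
    rw [div_one]
  rw [h1, h2]
  have h4 := lintegral_prod (μ := Measure.toSphere (volume : Measure (EuclideanSpace ℝ (Fin d))))
    (ν := Measure.volumeIoiPow (finrank ℝ (EuclideanSpace ℝ (Fin d)) - 1))
    (fun p : sphere (0 : EuclideanSpace ℝ (Fin d)) 1 × Set.Ioi (0:ℝ) => f p.2)
    (((hf.comp measurable_subtype_coe).comp measurable_snd).aemeasurable)
  rw [h4]
  simp only [lintegral_const]
  rw [Measure.toSphere_apply_univ, hdim]
  have h3 : ∫⁻ r : Set.Ioi (0:ℝ), f r ∂(Measure.volumeIoiPow (d - 1)) =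
      ∫⁻ r in Set.Ioi (0 : ℝ), ENNReal.ofReal (r ^ (d - 1)) * f r := by
    rw [Measure.volumeIoiPow]
    have hw := lintegral_withDensity_eq_lintegral_mul
      (Measure.comap (Subtype.val : Set.Ioi (0:ℝ) → ℝ) volume)
      (f := fun r : Set.Ioi (0:ℝ) => ENNReal.ofReal (r.1 ^ (d - 1)))
      (g := fun r : Set.Ioi (0:ℝ) => f r.1) (by fun_prop) (hf.comp measurable_subtype_coe)
    rw [hw]
    have h5 := setLIntegral_subtype (μ := (volume : Measure ℝ)) (s := Set.Ioi (0:ℝ))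
      measurableSet_Ioi univ (fun r : ℝ => ENNReal.ofReal (r ^ (d - 1)) * f r)
    rw [image_univ, Subtype.range_coe, setLIntegral_univ] at h5
    rw [← h5]
    rfl
  rw [h3]
  ring

lemma ball_lintegral (d : ℕ) (hd : 1 ≤ d) (a : ℝ) (ha0 : 0 < a) (had : a < d) :
    ∃ κ : ℝ, 0 ≤ κ ∧ ∀ r : ℝ, 0 ≤ r →
      ∫⁻ u : EuclideanSpace ℝ (Fin d) in closedBall 0 r, ENNReal.ofReal (‖u‖ ^ (-a)) ≤
        ENNReal.ofReal (κ * r ^ ((d : ℝ) - a)) := by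
  set b : ℝ := (d : ℝ) - 1 - a with hb
  have hb1 : -1 < b := by
    have h1 : (1:ℝ) ≤ d := by exact_mod_cast hd
    simp only [hb]; linarith
  have hda : (0:ℝ) < (d : ℝ) - a := by linarith
  refine ⟨(volume (ball (0 : EuclideanSpace ℝ (Fin d)) 1)).toReal * d / ((d:ℝ) - a), by positivity,
    fun r hr => ?_⟩
  have key : ∫⁻ u : EuclideanSpace ℝ (Fin d) in closedBall 0 r, ENNReal.ofReal (‖u‖ ^ (-a)) =
      volume (ball (0 : EuclideanSpace ℝ (Fin d)) 1) * d *
        ∫⁻ t in Set.Ioc (0:ℝ) r, ENNReal.ofReal (t ^ b) := by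
    have hg : Measurable fun t : ℝ => (Set.Iic r).indicator
        (fun t => ENNReal.ofReal (t ^ (-a))) t := by
      apply Measurable.indicator ?_ measurableSet_Iic
      fun_prop
    rw [← lintegral_indicator (measurableSet_closedBall)]
    have e1 : ∀ u : EuclideanSpace ℝ (Fin d),
        (closedBall (0 : EuclideanSpace ℝ (Fin d)) r).indicator
          (fun u => ENNReal.ofReal (‖u‖ ^ (-a))) u =
        (Set.Iic r).indicator (fun t => ENNReal.ofReal (t ^ (-a))) ‖u‖ := by
      intro u
      by_cases h : ‖u‖ ≤ r
      · rw [indicator_of_mem (by simpa [mem_closedBall, dist_zero_right] using h),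
          indicator_of_mem (by simpa using h)]
      · rw [indicator_of_notMem (by simpa [mem_closedBall, dist_zero_right] using h),
          indicator_of_notMem (by simpa using h)]
    rw [lintegral_congr e1, polar_lintegral d hd _ hg]
    congr 1
    have e2 : ∀ t : ℝ, ENNReal.ofReal (t ^ (d-1)) *
        (Set.Iic r).indicator (fun t => ENNReal.ofReal (t ^ (-a))) t =
        (Set.Iic r).indicator (fun t => ENNReal.ofReal (t ^ (d-1)) *
          ENNReal.ofReal (t ^ (-a))) t := by
      intro t; by_cases h : t ∈ Set.Iic r <;> simp [h]
    rw [lintegral_congr e2, lintegral_indicator measurableSet_Iic,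
      Measure.restrict_restrict measurableSet_Iic]
    have e3 : Set.Iic r ∩ Set.Ioi 0 = Set.Ioc (0:ℝ) r := by
      rw [Set.inter_comm, Set.Ioi_inter_Iic]
    rw [e3]
    refine setLIntegral_congr_fun measurableSet_Ioc (fun t ht => ?_)
    have ht0 : 0 < t := ht.1
    rw [← ENNReal.ofReal_mul (by positivity), ← Real.rpow_natCast t (d-1)]
    rw [← Real.rpow_add ht0]
    congr 2
    have : ((d - 1 : ℕ) : ℝ) = (d : ℝ) - 1 := by
      have := Nat.cast_sub hd (R := ℝ); simpa using this
    rw [this]; ring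
  rw [key]
  have hint : IntegrableOn (fun t : ℝ => t ^ b) (Set.Ioc 0 r) volume :=
    (intervalIntegral.intervalIntegrable_rpow' hb1).1
  have hval : ∫⁻ t in Set.Ioc (0:ℝ) r, ENNReal.ofReal (t ^ b) =
      ENNReal.ofReal (r ^ ((d:ℝ) - a) / ((d:ℝ) - a)) := by
    rw [← ofReal_integral_eq_lintegral_ofReal hint ?_]
    · congr 1
      rw [← intervalIntegral.integral_of_le hr, integral_rpow (Or.inl hb1)]
      rw [Real.zero_rpow (by linarith : b + 1 ≠ 0)]
      have : b + 1 = (d:ℝ) - a := by rw [hb]; ring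
      rw [this]; ring
    · filter_upwards [ae_restrict_mem measurableSet_Ioc] with t ht
      exact Real.rpow_nonneg ht.1.le _
  rw [hval]
  have hrw : volume (ball (0 : EuclideanSpace ℝ (Fin d)) 1) * (d : ENNReal) *
      ENNReal.ofReal (r ^ ((d:ℝ) - a) / ((d:ℝ) - a)) =
      ENNReal.ofReal ((volume (ball (0 : EuclideanSpace ℝ (Fin d)) 1)).toReal * d *
        (r ^ ((d:ℝ) - a) / ((d:ℝ) - a))) := by
    rw [ENNReal.ofReal_mul (by positivity), ENNReal.ofReal_mul (by positivity),
      ENNReal.ofReal_toReal measure_ball_lt_top.ne, ENNReal.ofReal_natCast]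
  rw [hrw]
  apply ENNReal.ofReal_le_ofReal
  apply le_of_eq
  field_simp

lemma kernel_conv_bound (d : ℕ) (hd : 1 ≤ d) (a c c' : ℝ) (ha0 : 0 < a) (had : a < d)
    (hc'0 : 0 ≤ c') (hc'a : c' ≤ a) (hc' : c' < a + c - d) :
    ∃ C : ℝ, 0 ≤ C ∧ ∀ y : EuclideanSpace ℝ (Fin d),
      ∫⁻ x : EuclideanSpace ℝ (Fin d),
          ENNReal.ofReal (‖x - y‖ ^ (-a) * (1 + ‖x‖) ^ (-c)) ≤
        ENNReal.ofReal (C * (1 + ‖y‖) ^ (-c')) := by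
  have hd1 : (1:ℝ) ≤ d := by exact_mod_cast hd
  have hc0 : 0 < c := by linarith
  obtain ⟨κ, hκ0, hκ⟩ := ball_lintegral d hd a ha0 had
  set e : ℝ := a + c - c' with he
  have hed : (d:ℝ) < e := by simp only [he]; linarith
  have hJint : Integrable (fun x : EuclideanSpace ℝ (Fin d) => (1 + ‖x‖) ^ (-e)) := by
    apply integrable_one_add_norm
    rwa [finrank_euclideanSpace_fin]
  set J : ℝ := ∫ x : EuclideanSpace ℝ (Fin d), (1 + ‖x‖) ^ (-e) with hJ
  have hJ0 : 0 ≤ J := integral_nonneg fun x => Real.rpow_nonneg (by positivity) _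
  refine ⟨κ * 2 ^ c' * (1/2 : ℝ) ^ ((d:ℝ) - a - c + c') + 2 ^ c' * 5 ^ (a - c') * J,
    by positivity, fun y => ?_⟩
  set R : ℝ := 1 + ‖y‖ with hR
  have hR1 : (1:ℝ) ≤ R := by simp [hR]
  have hR0 : (0:ℝ) < R := by linarith
  have hr0 : (0:ℝ) < R/2 := by linarith
  set s : Set (EuclideanSpace ℝ (Fin d)) := closedBall y (R/2) with hs
  have hms : MeasurableSet s := measurableSet_closedBall
  set f : EuclideanSpace ℝ (Fin d) → ENNReal :=
    fun x => ENNReal.ofReal (‖x - y‖ ^ (-a) * (1 + ‖x‖) ^ (-c)) with hf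
  have hmf : Measurable f := by
    apply ENNReal.measurable_ofReal.comp
    fun_prop
  -- half-power identity
  have hhalf : (R/2 : ℝ) ^ (-c') = 2 ^ c' * R ^ (-c') := by
    rw [div_eq_mul_inv, Real.mul_rpow hR0.le (by norm_num), Real.inv_rpow (by norm_num),
      ← Real.rpow_neg (by norm_num), neg_neg, mul_comm]
  -- piece 1
  have piece1 : ∫⁻ x in s, f x ≤
      ENNReal.ofReal (κ * 2 ^ c' * (1/2 : ℝ) ^ ((d:ℝ) - a - c + c') * R ^ (-c')) := by
    have step1 : ∫⁻ x in s, f x ≤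
        ∫⁻ x in s, ENNReal.ofReal ((R/2) ^ (-c)) *
          ENNReal.ofReal (‖x - y‖ ^ (-a)) := by
      apply setLIntegral_mono' hms
      intro x hx
      have hxy : ‖x - y‖ ≤ R/2 := by
        rw [hs, mem_closedBall, dist_eq_norm] at hx; exact hx
      have hx1 : R/2 ≤ 1 + ‖x‖ := by
        have h2 : ‖y‖ - ‖x - y‖ ≤ ‖x‖ := by
          have h3 : ‖y‖ ≤ ‖y - x‖ + ‖x‖ := by
            calc ‖y‖ = ‖(y - x) + x‖ := by rw [sub_add_cancel]
              _ ≤ ‖y - x‖ + ‖x‖ := norm_add_le _ _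
          rw [norm_sub_rev] at h3
          linarith
        simp only [hR] at hxy ⊢
        linarith
      rw [hf, ← ENNReal.ofReal_mul (by positivity)]
      apply ENNReal.ofReal_le_ofReal
      rw [mul_comm ((R/2) ^ (-c))]
      apply mul_le_mul_of_nonneg_left _ (Real.rpow_nonneg (norm_nonneg _) _)
      exact Real.rpow_le_rpow_of_nonpos hr0 hx1 (by linarith)
    have step2 : ∫⁻ x in s, ENNReal.ofReal ((R/2) ^ (-c)) *
          ENNReal.ofReal (‖x - y‖ ^ (-a)) =
        ENNReal.ofReal ((R/2) ^ (-c)) * ∫⁻ x in s, ENNReal.ofReal (‖x - y‖ ^ (-a)) := by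
      apply lintegral_const_mul
      fun_prop
    have step3 : ∫⁻ x in s, ENNReal.ofReal (‖x - y‖ ^ (-a)) =
        ∫⁻ u in closedBall (0 : EuclideanSpace ℝ (Fin d)) (R/2),
          ENNReal.ofReal (‖u‖ ^ (-a)) := by
      rw [← lintegral_indicator hms, ← lintegral_indicator measurableSet_closedBall]
      have key : ∀ x : EuclideanSpace ℝ (Fin d),
          s.indicator (fun x => ENNReal.ofReal (‖x - y‖ ^ (-a))) x =
          (closedBall (0 : EuclideanSpace ℝ (Fin d)) (R/2)).indicator
            (fun u => ENNReal.ofReal (‖u‖ ^ (-a))) (x + -y) := by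
        intro x
        by_cases h : ‖x - y‖ ≤ R/2
        · rw [indicator_of_mem (by rw [hs, mem_closedBall, dist_eq_norm]; exact h),
            indicator_of_mem (by rw [mem_closedBall, dist_zero_right, ← sub_eq_add_neg]; exact h)]
          rw [← sub_eq_add_neg]
        · rw [indicator_of_notMem (by rw [hs, mem_closedBall, dist_eq_norm]; exact h),
            indicator_of_notMem (by rw [mem_closedBall, dist_zero_right, ← sub_eq_add_neg]; exact h)]
      rw [lintegral_congr key]
      exact lintegral_add_right_eq_self _ (-y)
    calc ∫⁻ x in s, f x ≤ ENNReal.ofReal ((R/2) ^ (-c)) *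
          ∫⁻ x in s, ENNReal.ofReal (‖x - y‖ ^ (-a)) := by rw [← step2]; exact step1
      _ ≤ ENNReal.ofReal ((R/2) ^ (-c)) * ENNReal.ofReal (κ * (R/2) ^ ((d:ℝ) - a)) := by
          rw [step3]
          exact mul_le_mul_right (hκ (R/2) hr0.le) _
      _ ≤ ENNReal.ofReal (κ * 2 ^ c' * (1/2 : ℝ) ^ ((d:ℝ) - a - c + c') * R ^ (-c')) := by
          rw [← ENNReal.ofReal_mul (Real.rpow_nonneg hr0.le _)]
          apply ENNReal.ofReal_le_ofReal
          have e1 : (R/2) ^ (-c) * (κ * (R/2) ^ ((d:ℝ) - a)) =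
              κ * (R/2) ^ ((d:ℝ) - a - c) := by
            rw [show (d:ℝ) - a - c = -c + ((d:ℝ) - a) by ring, Real.rpow_add hr0]
            ring
          rw [e1]
          have e2 : (R/2 : ℝ) ^ ((d:ℝ) - a - c + c') ≤ (1/2 : ℝ) ^ ((d:ℝ) - a - c + c') :=
            Real.rpow_le_rpow_of_nonpos (by norm_num) (by linarith) (by linarith)
          have e4 : (R/2 : ℝ) ^ ((d:ℝ) - a - c) =
              (2 ^ c' * R ^ (-c')) * (R/2) ^ ((d:ℝ) - a - c + c') := by
            rw [← hhalf, ← Real.rpow_add hr0]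
            congr 1
            ring
          calc κ * (R/2 : ℝ) ^ ((d:ℝ) - a - c)
              = κ * ((2 ^ c' * R ^ (-c')) * (R/2) ^ ((d:ℝ) - a - c + c')) := by rw [e4]
            _ ≤ κ * ((2 ^ c' * R ^ (-c')) * (1/2 : ℝ) ^ ((d:ℝ) - a - c + c')) := by
                apply mul_le_mul_of_nonneg_left _ hκ0
                apply mul_le_mul_of_nonneg_left e2 (by positivity)
            _ = κ * 2 ^ c' * (1/2 : ℝ) ^ ((d:ℝ) - a - c + c') * R ^ (-c') := by ring
  -- piece 2
  have piece2 : ∫⁻ x in sᶜ, f x ≤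
      ENNReal.ofReal (2 ^ c' * 5 ^ (a - c') * J * R ^ (-c')) := by
    have step1 : ∫⁻ x in sᶜ, f x ≤
        ∫⁻ x in sᶜ, ENNReal.ofReal ((R/2) ^ (-c') * 5 ^ (a - c')) *
          ENNReal.ofReal ((1 + ‖x‖) ^ (-e)) := by
      apply setLIntegral_mono' hms.compl
      intro x hx
      have hxy : R/2 < ‖x - y‖ := by
        simp only [hs, mem_compl_iff, mem_closedBall, dist_eq_norm, not_le] at hx
        exact hx
      have hxy0 : (0:ℝ) < ‖x - y‖ := lt_of_lt_of_le hr0 hxy.le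
      have h5 : (1 + ‖x‖)/5 ≤ ‖x - y‖ := by
        have h1 : ‖x‖ ≤ ‖x - y‖ + ‖y‖ := by
          calc ‖x‖ = ‖(x - y) + y‖ := by rw [sub_add_cancel]
            _ ≤ ‖x - y‖ + ‖y‖ := norm_add_le _ _
        have h2 : ‖y‖ ≤ 2 * ‖x - y‖ := by
          have h4 : ‖y‖ ≤ R := by simp [hR]
          linarith
        have h3 : (1:ℝ) ≤ 2 * ‖x - y‖ := by linarith
        linarith
      rw [hf, ← ENNReal.ofReal_mul (by positivity)]
      apply ENNReal.ofReal_le_ofReal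
      have e1 : ‖x - y‖ ^ (-a) = ‖x - y‖ ^ (-c') * ‖x - y‖ ^ (-(a - c')) := by
        rw [← Real.rpow_add hxy0]; ring_nf
      have b1 : ‖x - y‖ ^ (-c') ≤ (R/2) ^ (-c') :=
        Real.rpow_le_rpow_of_nonpos hr0 hxy.le (by linarith)
      have b2 : ‖x - y‖ ^ (-(a - c')) ≤ ((1 + ‖x‖)/5) ^ (-(a - c')) :=
        Real.rpow_le_rpow_of_nonpos (by positivity) h5 (by linarith)
      have e2 : ((1 + ‖x‖)/5 : ℝ) ^ (-(a - c')) = 5 ^ (a - c') * (1 + ‖x‖) ^ (-(a - c')) := by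
        rw [Real.div_rpow (by positivity) (by norm_num), div_eq_mul_inv,
          ← Real.rpow_neg (by norm_num), neg_neg, mul_comm]
      have e3 : (1 + ‖x‖ : ℝ) ^ (-(a - c')) * (1 + ‖x‖) ^ (-c) = (1 + ‖x‖) ^ (-e) := by
        rw [← Real.rpow_add (by positivity), he]; ring_nf
      calc ‖x - y‖ ^ (-a) * (1 + ‖x‖) ^ (-c)
          = ‖x - y‖ ^ (-c') * ‖x - y‖ ^ (-(a - c')) * (1 + ‖x‖) ^ (-c) := by rw [← e1]
        _ ≤ (R/2) ^ (-c') * (5 ^ (a - c') * (1 + ‖x‖) ^ (-(a - c'))) * (1 + ‖x‖) ^ (-c) := by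
            apply mul_le_mul_of_nonneg_right _ (Real.rpow_nonneg (by positivity) _)
            rw [← e2]
            exact mul_le_mul b1 b2 (Real.rpow_nonneg (norm_nonneg _) _)
              (Real.rpow_nonneg hr0.le _)
        _ = (R/2) ^ (-c') * 5 ^ (a - c') * ((1 + ‖x‖) ^ (-(a - c')) * (1 + ‖x‖) ^ (-c)) := by
            ring
        _ = (R/2) ^ (-c') * 5 ^ (a - c') * (1 + ‖x‖) ^ (-e) := by rw [e3]
    calc ∫⁻ x in sᶜ, f x
        ≤ ∫⁻ x in sᶜ, ENNReal.ofReal ((R/2) ^ (-c') * 5 ^ (a - c')) *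
          ENNReal.ofReal ((1 + ‖x‖) ^ (-e)) := step1
      _ ≤ ∫⁻ x, ENNReal.ofReal ((R/2) ^ (-c') * 5 ^ (a - c')) *
          ENNReal.ofReal ((1 + ‖x‖) ^ (-e)) := setLIntegral_le_lintegral _ _
      _ = ENNReal.ofReal ((R/2) ^ (-c') * 5 ^ (a - c')) *
          ∫⁻ x, ENNReal.ofReal ((1 + ‖x‖) ^ (-e)) := by
            apply lintegral_const_mul; fun_prop
      _ = ENNReal.ofReal ((R/2) ^ (-c') * 5 ^ (a - c')) * ENNReal.ofReal J := by
            rw [← ofReal_integral_eq_lintegral_ofReal hJint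
              (ae_of_all _ fun x => Real.rpow_nonneg (by positivity) _)]
      _ ≤ ENNReal.ofReal (2 ^ c' * 5 ^ (a - c') * J * R ^ (-c')) := by
            rw [← ENNReal.ofReal_mul (by positivity)]
            apply ENNReal.ofReal_le_ofReal
            rw [hhalf]
            apply le_of_eq
            ring
  calc ∫⁻ x : EuclideanSpace ℝ (Fin d), f x
      = (∫⁻ x in s, f x) + ∫⁻ x in sᶜ, f x := (lintegral_add_compl f hms).symm
    _ ≤ ENNReal.ofReal (κ * 2 ^ c' * (1/2 : ℝ) ^ ((d:ℝ) - a - c + c') * R ^ (-c')) +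
        ENNReal.ofReal (2 ^ c' * 5 ^ (a - c') * J * R ^ (-c')) := add_le_add piece1 piece2
    _ = ENNReal.ofReal ((κ * 2 ^ c' * (1/2 : ℝ) ^ ((d:ℝ) - a - c + c') +
        2 ^ c' * 5 ^ (a - c') * J) * R ^ (-c')) := by
          rw [← ENNReal.ofReal_add (by positivity) (by positivity)]
          congr 1
          ring

lemma ofReal_integral_le {α : Type*} [MeasurableSpace α] (μ : Measure α) (f : α → ℝ)
    (hf : ∀ x, 0 ≤ f x) :
    ENNReal.ofReal (∫ x, f x ∂μ) ≤ ∫⁻ x, ENNReal.ofReal (f x) ∂μ := by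
  by_cases hi : Integrable f μ
  · rw [ofReal_integral_eq_lintegral_ofReal hi (ae_of_all _ hf)]
  · rw [integral_undef hi]; simp

noncomputable def rieszG (d : ℕ) (α : ℝ) (ψ : EuclideanSpace ℝ (Fin d) → ℝ)
    (x : EuclideanSpace ℝ (Fin d)) : ℝ :=
  ∫ y : EuclideanSpace ℝ (Fin d), ψ y * ‖x - y‖ ^ (α - d)

-- Schwartz decay
lemma schwartz_decay_bound (d : ℕ) (φ : SchwartzMap (EuclideanSpace ℝ (Fin d)) ℝ) :
    ∃ Cφ : ℝ, 0 ≤ Cφ ∧ ∀ z, φ z ≤ Cφ * (1 + ‖z‖) ^ (-((d : ℝ) + 1)) := by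
  set C : ℝ := 2 ^ (d + 1) *
    ((Finset.Iic ((d+1, 0) : ℕ × ℕ)).sup fun m => SchwartzMap.seminorm ℝ m.1 m.2) φ with hC
  have hC0 : 0 ≤ C := by
    apply mul_nonneg (by positivity)
    exact apply_nonneg _ _
  refine ⟨C, hC0, fun z => ?_⟩
  have key := SchwartzMap.one_add_le_sup_seminorm_apply (𝕜 := ℝ) (m := ((d+1 : ℕ), (0:ℕ)))
    (k := d + 1) (n := 0) le_rfl le_rfl φ z
  rw [norm_iteratedFDeriv_zero] at key
  have hz : (0:ℝ) < 1 + ‖z‖ := by positivity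
  have e1 : ((1 : ℝ) + ‖z‖) ^ (-((d : ℝ) + 1)) = ((1 + ‖z‖) ^ (d + 1 : ℕ))⁻¹ := by
    rw [Real.rpow_neg hz.le, ← Real.rpow_natCast (1 + ‖z‖) (d + 1)]
    push_cast
    ring_nf
  rw [e1, ← div_eq_mul_inv, le_div_iff₀ (by positivity)]
  calc φ z * (1 + ‖z‖) ^ (d + 1 : ℕ) ≤ ‖φ z‖ * (1 + ‖z‖) ^ (d + 1 : ℕ) := by
        apply mul_le_mul_of_nonneg_right (Real.le_norm_self _) (by positivity)
    _ = (1 + ‖z‖) ^ (d + 1 : ℕ) * ‖φ z‖ := by ring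
    _ ≤ C := key

theorem stmt18 (d : ℕ) (hd : 1 ≤ d) (α β γ : ℝ) (hα : 0 < α) (hα2 : α ≤ 2)
    (hβ : 0 < β) (hβ1 : β ≤ 1) (hαγ : α < γ) (hγd : γ ≤ d) (hdα : α < d)
    (hdim : (α * (2 + β) - γ) / β < d)
    (φ : SchwartzMap (EuclideanSpace ℝ (Fin d)) ℝ) (hφ : ∀ x, 0 ≤ φ x) :
    (∫⁻ x : EuclideanSpace ℝ (Fin d),
        ENNReal.ofReal
          (rieszG d α (fun y => (rieszG d α (fun z => φ z) y) ^ (1 + β)) x *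
            (1 + ‖x‖ ^ γ)⁻¹)) < ⊤ := by
  have hd1 : (1:ℝ) ≤ d := by exact_mod_cast hd
  set a : ℝ := (d : ℝ) - α with ha
  have ha0 : 0 < a := by simp only [ha]; linarith
  have haexp : α - (d:ℝ) = -a := by rw [ha]; ring
  have hdimβ : α * (2 + β) - γ < d * β := by
    have := (div_lt_iff₀ hβ).mp hdim
    linarith
  -- the kernel is nonneg
  have hker : ∀ x y : EuclideanSpace ℝ (Fin d), (0:ℝ) ≤ ‖x - y‖ ^ (α - (d:ℝ)) :=
    fun x y => Real.rpow_nonneg (norm_nonneg _) _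
  -- G φ is nonneg
  have hG0 : ∀ y, 0 ≤ rieszG d α (fun z => φ z) y := fun y =>
    integral_nonneg fun z => mul_nonneg (hφ z) (hker y z)
  -- Step A : bound on G φ
  obtain ⟨Cφ, hCφ0, hCφ⟩ := schwartz_decay_bound d φ
  obtain ⟨C1, hC10, hC1⟩ := kernel_conv_bound d hd a ((d:ℝ)+1) a ha0 (by linarith)
    ha0.le le_rfl (by linarith)
  set M : ℝ := Cφ * C1 with hM
  have hM0 : 0 ≤ M := mul_nonneg hCφ0 hC10
  have hGb : ∀ y, rieszG d α (fun z => φ z) y ≤ M * (1 + ‖y‖) ^ (-a) := by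
    intro y
    have chain : ENNReal.ofReal (rieszG d α (fun z => φ z) y) ≤
        ENNReal.ofReal (M * (1 + ‖y‖) ^ (-a)) := by
      calc ENNReal.ofReal (rieszG d α (fun z => φ z) y)
          ≤ ∫⁻ z, ENNReal.ofReal (φ z * ‖y - z‖ ^ (α - (d:ℝ))) :=
            ofReal_integral_le _ _ (fun z => mul_nonneg (hφ z) (hker y z))
        _ ≤ ∫⁻ z, ENNReal.ofReal Cφ *
              ENNReal.ofReal (‖z - y‖ ^ (-a) * (1 + ‖z‖) ^ (-((d:ℝ)+1))) := by
            apply lintegral_mono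
            intro z
            dsimp only
            rw [← ENNReal.ofReal_mul hCφ0]
            apply ENNReal.ofReal_le_ofReal
            rw [haexp, norm_sub_rev y z]
            calc φ z * ‖z - y‖ ^ (-a)
                ≤ (Cφ * (1 + ‖z‖) ^ (-((d:ℝ)+1))) * ‖z - y‖ ^ (-a) :=
                  mul_le_mul_of_nonneg_right (hCφ z) (Real.rpow_nonneg (norm_nonneg _) _)
              _ = Cφ * (‖z - y‖ ^ (-a) * (1 + ‖z‖) ^ (-((d:ℝ)+1))) := by ring
        _ = ENNReal.ofReal Cφ *
              ∫⁻ z, ENNReal.ofReal (‖z - y‖ ^ (-a) * (1 + ‖z‖) ^ (-((d:ℝ)+1))) := by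
            apply lintegral_const_mul
            fun_prop
        _ ≤ ENNReal.ofReal Cφ * ENNReal.ofReal (C1 * (1 + ‖y‖) ^ (-a)) :=
            mul_le_mul_right (hC1 y) _
        _ = ENNReal.ofReal (M * (1 + ‖y‖) ^ (-a)) := by
            rw [← ENNReal.ofReal_mul hCφ0, hM]
            ring_nf
    have hrhs : 0 ≤ M * (1 + ‖y‖) ^ (-a) :=
      mul_nonneg hM0 (Real.rpow_nonneg (by positivity) _)
    exact (ENNReal.ofReal_le_ofReal_iff hrhs).mp chain
  -- Step B : bound on F = (Gφ)^(1+β)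
  set F : EuclideanSpace ℝ (Fin d) → ℝ :=
    fun y => (rieszG d α (fun z => φ z) y) ^ (1 + β) with hF
  have hF0 : ∀ y, 0 ≤ F y := fun y => Real.rpow_nonneg (hG0 y) _
  set P : ℝ := (-a) * (1 + β) with hP
  set Mβ : ℝ := M ^ (1 + β) with hMβ
  have hMβ0 : 0 ≤ Mβ := Real.rpow_nonneg hM0 _
  have hFb : ∀ y, F y ≤ Mβ * (1 + ‖y‖) ^ P := by
    intro y
    have h1 : F y ≤ (M * (1 + ‖y‖) ^ (-a)) ^ (1 + β) :=
      Real.rpow_le_rpow (hG0 y) (hGb y) (by linarith)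
    have h2 : (M * (1 + ‖y‖) ^ (-a)) ^ (1 + β) = Mβ * (1 + ‖y‖) ^ P := by
      rw [Real.mul_rpow hM0 (Real.rpow_nonneg (by positivity) _), hMβ, hP,
        ← Real.rpow_mul (by positivity : (0:ℝ) ≤ 1 + ‖y‖)]
    linarith
  -- Step C : the outer kernel bound
  set ε : ℝ := min ((d*β - (α*(2+β) - γ))/2) ((γ - α)/2) with hε
  have hε0 : 0 < ε := by
    apply lt_min <;> [linarith; linarith]
  have hε2 : ε ≤ (γ - α)/2 := min_le_right _ _
  have hε1 : ε ≤ (d*β - (α*(2+β) - γ))/2 := min_le_left _ _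
  set c'' : ℝ := γ - α - ε with hc''
  obtain ⟨C2, hC20, hC2⟩ := kernel_conv_bound d hd a γ c'' ha0 (by linarith)
    (by simp only [hc'']; linarith) (by simp only [hc'', ha]; linarith)
    (by simp only [hc'', ha]; linarith)
  -- Step D : weight bound
  have hW : ∀ x : EuclideanSpace ℝ (Fin d),
      (1 + ‖x‖ ^ γ)⁻¹ ≤ 2 ^ γ * (1 + ‖x‖) ^ (-γ) := by
    intro x
    set t : ℝ := ‖x‖ with ht
    have ht0 : 0 ≤ t := norm_nonneg _
    have hγ0 : 0 < γ := by linarith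
    have key : (1 + t) ^ γ ≤ 2 ^ γ * (1 + t ^ γ) := by
      rcases le_total t 1 with h | h
      · calc (1 + t) ^ γ ≤ 2 ^ γ :=
              Real.rpow_le_rpow (by positivity) (by linarith) hγ0.le
          _ ≤ 2 ^ γ * (1 + t ^ γ) := by
              apply le_mul_of_one_le_right (by positivity)
              have : 0 ≤ t ^ γ := Real.rpow_nonneg ht0 _
              linarith
      · calc (1 + t) ^ γ ≤ (2 * t) ^ γ :=
              Real.rpow_le_rpow (by positivity) (by linarith) hγ0.le
          _ = 2 ^ γ * t ^ γ := Real.mul_rpow (by norm_num) ht0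
          _ ≤ 2 ^ γ * (1 + t ^ γ) := by
              apply mul_le_mul_of_nonneg_left _ (by positivity)
              linarith
    have h1 : (0:ℝ) < 1 + t ^ γ := by
      have : 0 ≤ t ^ γ := Real.rpow_nonneg ht0 _
      linarith
    have h2 : (0:ℝ) < (1 + t) ^ γ := Real.rpow_pos_of_pos (by linarith) _
    rw [Real.rpow_neg (by positivity), ← one_div, ← one_div, mul_one_div,
      div_le_div_iff₀ h1 h2]
    linarith
  -- Step E : main chain
  set W : EuclideanSpace ℝ (Fin d) → ℝ := fun x => (1 + ‖x‖ ^ γ)⁻¹ with hWdef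
  have hW0 : ∀ x, 0 ≤ W x := fun x => by
    have : (0:ℝ) < 1 + ‖x‖ ^ γ := by
      have : 0 ≤ ‖x‖ ^ γ := Real.rpow_nonneg (norm_nonneg _) _
      linarith
    positivity
  set H : EuclideanSpace ℝ (Fin d) → EuclideanSpace ℝ (Fin d) → ENNReal :=
    fun x y => ENNReal.ofReal (Mβ * (1 + ‖y‖) ^ P) *
      ENNReal.ofReal (‖x - y‖ ^ (-a) * (2 ^ γ * (1 + ‖x‖) ^ (-γ))) with hH
  have claim1 : ∀ x, ENNReal.ofReal (rieszG d α F x * W x) ≤ ∫⁻ y, H x y := by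
    intro x
    have hGF0 : 0 ≤ rieszG d α F x :=
      integral_nonneg fun y => mul_nonneg (hF0 y) (hker x y)
    calc ENNReal.ofReal (rieszG d α F x * W x)
        = ENNReal.ofReal (rieszG d α F x) * ENNReal.ofReal (W x) :=
          ENNReal.ofReal_mul hGF0
      _ ≤ (∫⁻ y, ENNReal.ofReal (F y * ‖x - y‖ ^ (α - (d:ℝ)))) * ENNReal.ofReal (W x) :=
          mul_le_mul_left (ofReal_integral_le _ _
            (fun y => mul_nonneg (hF0 y) (hker x y))) _
      _ = ∫⁻ y, ENNReal.ofReal (F y * ‖x - y‖ ^ (α - (d:ℝ))) * ENNReal.ofReal (W x) :=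
          (lintegral_mul_const' _ _ ENNReal.ofReal_ne_top).symm
      _ ≤ ∫⁻ y, H x y := by
          apply lintegral_mono
          intro y
          dsimp only
          have b1 : ENNReal.ofReal (F y * ‖x - y‖ ^ (α - (d:ℝ))) ≤
              ENNReal.ofReal ((Mβ * (1 + ‖y‖) ^ P) * ‖x - y‖ ^ (-a)) := by
            apply ENNReal.ofReal_le_ofReal
            rw [haexp]
            exact mul_le_mul_of_nonneg_right (hFb y) (Real.rpow_nonneg (norm_nonneg _) _)
          have b2 : ENNReal.ofReal (W x) ≤ ENNReal.ofReal (2 ^ γ * (1 + ‖x‖) ^ (-γ)) :=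
            ENNReal.ofReal_le_ofReal (hW x)
          calc ENNReal.ofReal (F y * ‖x - y‖ ^ (α - (d:ℝ))) * ENNReal.ofReal (W x)
              ≤ ENNReal.ofReal ((Mβ * (1 + ‖y‖) ^ P) * ‖x - y‖ ^ (-a)) *
                ENNReal.ofReal (2 ^ γ * (1 + ‖x‖) ^ (-γ)) :=
                mul_le_mul' b1 b2
            _ = ENNReal.ofReal (Mβ * (1 + ‖y‖) ^ P) *
                ENNReal.ofReal (‖x - y‖ ^ (-a) * (2 ^ γ * (1 + ‖x‖) ^ (-γ))) := by
                rw [ENNReal.ofReal_mul (mul_nonneg hMβ0 (Real.rpow_nonneg (by positivity) _)),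
                  ENNReal.ofReal_mul (Real.rpow_nonneg (norm_nonneg _) _), mul_assoc]
    -- done claim1
  have hHmeas : Measurable (Function.uncurry H) := by
    apply Measurable.fun_mul
    · apply ENNReal.measurable_ofReal.comp
      fun_prop
    · apply ENNReal.measurable_ofReal.comp
      apply Measurable.mul
      · have hsub : Measurable fun p : EuclideanSpace ℝ (Fin d) × EuclideanSpace ℝ (Fin d) =>
            p.1 - p.2 := measurable_fst.sub measurable_snd
        fun_prop
      · fun_prop
  have claim3 : ∀ y, ∫⁻ x, H x y ≤ ENNReal.ofReal (Mβ * (1 + ‖y‖) ^ P) *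
      (ENNReal.ofReal (2 ^ γ) * ENNReal.ofReal (C2 * (1 + ‖y‖) ^ (-c''))) := by
    intro y
    have e5 : ∀ x, H x y = ENNReal.ofReal (Mβ * (1 + ‖y‖) ^ P) *
        (ENNReal.ofReal (2 ^ γ) *
          ENNReal.ofReal (‖x - y‖ ^ (-a) * (1 + ‖x‖) ^ (-γ))) := by
      intro x
      rw [hH]
      congr 1
      rw [← ENNReal.ofReal_mul (by positivity)]
      congr 1
      ring
    calc ∫⁻ x, H x y
        = ENNReal.ofReal (Mβ * (1 + ‖y‖) ^ P) * ∫⁻ x, (ENNReal.ofReal (2 ^ γ) *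
            ENNReal.ofReal (‖x - y‖ ^ (-a) * (1 + ‖x‖) ^ (-γ))) := by
          rw [← lintegral_const_mul' _ _ ENNReal.ofReal_ne_top]
          exact lintegral_congr e5
      _ = ENNReal.ofReal (Mβ * (1 + ‖y‖) ^ P) * (ENNReal.ofReal (2 ^ γ) *
            ∫⁻ x, ENNReal.ofReal (‖x - y‖ ^ (-a) * (1 + ‖x‖) ^ (-γ))) := by
          rw [lintegral_const_mul' _ _ ENNReal.ofReal_ne_top]
      _ ≤ ENNReal.ofReal (Mβ * (1 + ‖y‖) ^ P) *
          (ENNReal.ofReal (2 ^ γ) * ENNReal.ofReal (C2 * (1 + ‖y‖) ^ (-c''))) := by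
          apply mul_le_mul_right
          exact mul_le_mul_right (hC2 y) _
  -- final combination
  set κf : ℝ := a * (1 + β) + c'' with hκf
  have hκfd : (d:ℝ) < κf := by
    simp only [hκf, ha, hc'']
    nlinarith [hε1]
  have hJ2int : Integrable (fun y : EuclideanSpace ℝ (Fin d) => (1 + ‖y‖) ^ (-κf)) := by
    apply integrable_one_add_norm
    rwa [finrank_euclideanSpace_fin]
  set J2 : ℝ := ∫ y : EuclideanSpace ℝ (Fin d), (1 + ‖y‖) ^ (-κf) with hJ2
  have final : ∫⁻ y : EuclideanSpace ℝ (Fin d), ENNReal.ofReal (Mβ * (1 + ‖y‖) ^ P) *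
      (ENNReal.ofReal (2 ^ γ) * ENNReal.ofReal (C2 * (1 + ‖y‖) ^ (-c''))) < ⊤ := by
    have e6 : ∀ y : EuclideanSpace ℝ (Fin d), ENNReal.ofReal (Mβ * (1 + ‖y‖) ^ P) *
        (ENNReal.ofReal (2 ^ γ) * ENNReal.ofReal (C2 * (1 + ‖y‖) ^ (-c''))) =
        ENNReal.ofReal (Mβ * 2 ^ γ * C2) * ENNReal.ofReal ((1 + ‖y‖) ^ (-κf)) := by
      intro y
      have hy0 : (0:ℝ) < 1 + ‖y‖ := by positivity
      rw [← ENNReal.ofReal_mul (by positivity : (0:ℝ) ≤ 2 ^ γ),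
        ← ENNReal.ofReal_mul (mul_nonneg hMβ0 (Real.rpow_nonneg hy0.le _)),
        ← ENNReal.ofReal_mul (mul_nonneg (mul_nonneg hMβ0 (by positivity)) hC20)]
      congr 1
      have : (1 + ‖y‖) ^ P * (1 + ‖y‖) ^ (-c'') = (1 + ‖y‖) ^ (-κf) := by
        rw [← Real.rpow_add hy0]
        congr 1
        rw [hP, hκf]
        ring
      calc Mβ * (1 + ‖y‖) ^ P * (2 ^ γ * (C2 * (1 + ‖y‖) ^ (-c'')))
          = Mβ * 2 ^ γ * C2 * ((1 + ‖y‖) ^ P * (1 + ‖y‖) ^ (-c'')) := by ring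
        _ = Mβ * 2 ^ γ * C2 * (1 + ‖y‖) ^ (-κf) := by rw [this]
    rw [lintegral_congr e6]
    rw [lintegral_const_mul' _ _ ENNReal.ofReal_ne_top]
    rw [← ofReal_integral_eq_lintegral_ofReal hJ2int
      (ae_of_all _ fun y => Real.rpow_nonneg (by positivity) _)]
    exact ENNReal.mul_lt_top ENNReal.ofReal_lt_top ENNReal.ofReal_lt_top
  calc (∫⁻ x : EuclideanSpace ℝ (Fin d),
        ENNReal.ofReal (rieszG d α (fun y => (rieszG d α (fun z => φ z) y) ^ (1 + β)) x *
          (1 + ‖x‖ ^ γ)⁻¹))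
      ≤ ∫⁻ x, ∫⁻ y, H x y := lintegral_mono claim1
    _ = ∫⁻ y, ∫⁻ x, H x y := lintegral_lintegral_swap hHmeas.aemeasurable
    _ ≤ ∫⁻ y, ENNReal.ofReal (Mβ * (1 + ‖y‖) ^ P) *
        (ENNReal.ofReal (2 ^ γ) * ENNReal.ofReal (C2 * (1 + ‖y‖) ^ (-c''))) :=
        lintegral_mono claim3
    _ < ⊤ := final
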